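/- arXiv:2510.14475 — 13 statements merged into one kernel-verified Lean document; each statement's English description precedes it below -/
import Mathlib

section
/- Let W be a vector space over 𝔽₂ = ZMod 2, let t ≤ n, and let f(k,x) = g₁(x) + g₂(x + α(k)) be an XOR-type function, where g₁, g₂ : 𝔽₂^{n−t} × 𝔽₂^{t} → W are arbitrary functions and α : K → 𝔽₂^{n−t} × 𝔽₂^{t}. Suppose there exist k₀ ∈ K and a nonzero period s = (s^l, s^r) ∈ 𝔽₂^{n−t} × 𝔽₂^{t} such that f(k₀, x + s) = f(k₀, x) for all x. Define F^L(k, y) = ∑_{u ∈ 𝔽₂^{t}} f(k, (y, u)) for y ∈ 𝔽₂^{n−t}. Then for every k ∈ K whose secret state agrees with that of k₀ in the high n−t bits (i.e. the first component of α(k) equals the first component of α(k₀)), the function F^L(k, ·) has period s^l: F^L(k, y + s^l) = F^L(k, y) for all y ∈ 𝔽₂^{n−t}. -/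
/-- Property 1: if the XOR-type function `f(k, x) = g₁(x) + g₂(x + α(k))`
has a nonzero period `s = (s^l, s^r)` at `k = k₀`, then for every index `k`
whose secret state agrees with that of `k₀` in the high `n - t` bits, the
truncated function `F^L(k, y) = ∑_{u ∈ 𝔽₂^t} f(k, (y, u))` has period `s^l`. -/
theorem truncated_xor_type_has_truncated_period
    {n t : ℕ} (ht : t ≤ n)
    {W : Type*} [AddCommGroup W] [Module (ZMod 2) W]
    {K : Type*}
    (g₁ g₂ : (Fin (n - t) → ZMod 2) × (Fin t → ZMod 2) → W)
    (α : K → (Fin (n - t) → ZMod 2) × (Fin t → ZMod 2))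
    (f : K → (Fin (n - t) → ZMod 2) × (Fin t → ZMod 2) → W)
    (hf : ∀ k x, f k x = g₁ x + g₂ (x + α k))
    (k₀ : K) (s : (Fin (n - t) → ZMod 2) × (Fin t → ZMod 2))
    (hs : s ≠ 0)
    (hper : ∀ x, f k₀ (x + s) = f k₀ x)
    (F : K → (Fin (n - t) → ZMod 2) → W)
    (hF : ∀ k y, F k y = ∑ u : Fin t → ZMod 2, f k (y, u)) :
    ∀ k : K, (α k).1 = (α k₀).1 →
      ∀ y : Fin (n - t) → ZMod 2, F k (y + s.1) = F k y := by
  intro k hk y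
  classical
  set A : (Fin (n-t) → ZMod 2) → W := fun c => ∑ u : Fin t → ZMod 2, g₁ (c, u) with hA
  set B : (Fin (n-t) → ZMod 2) → W := fun c => ∑ u : Fin t → ZMod 2, g₂ (c, u) with hB
  have key : ∀ (b : Fin t → ZMod 2) (h : (Fin t → ZMod 2) → W),
      ∑ u : Fin t → ZMod 2, h (u + b) = ∑ u, h u := fun b h =>
    Fintype.sum_equiv (Equiv.addRight b) _ _ (fun u => rfl)
  have hFAB : ∀ (k' : K) (z : Fin (n-t) → ZMod 2),
      F k' z = A z + B (z + (α k').1) := by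
    intro k' z
    rw [hF]
    simp only [hf]
    rw [Finset.sum_add_distrib]
    congr 1
    have := key (α k').2 (fun u => g₂ (z + (α k').1, u))
    simp only [hB]
    rw [← this]
    apply Finset.sum_congr rfl
    intro u _
    rfl
  have hsum : A (y + s.1) + B (y + s.1 + (α k₀).1) = A y + B (y + (α k₀).1) := by
    have h1 : ∑ u : Fin t → ZMod 2, f k₀ ((y, u) + s) = ∑ u : Fin t → ZMod 2, f k₀ (y, u) :=
      Finset.sum_congr rfl (fun u _ => hper (y, u))
    simp only [hf] at h1
    rw [Finset.sum_add_distrib, Finset.sum_add_distrib] at h1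
    have e1 : ∑ u : Fin t → ZMod 2, g₁ ((y, u) + s) = A (y + s.1) := by
      have := key s.2 (fun u => g₁ (y + s.1, u))
      simp only [hA]
      rw [← this]
      apply Finset.sum_congr rfl; intro u _; rfl
    have e2 : ∑ u : Fin t → ZMod 2, g₂ ((y, u) + s + α k₀) = B (y + s.1 + (α k₀).1) := by
      have := key (s.2 + (α k₀).2) (fun u => g₂ (y + s.1 + (α k₀).1, u))
      simp only [hB]
      rw [← this]
      apply Finset.sum_congr rfl; intro u _
      show g₂ (y + s.1 + (α k₀).1, u + s.2 + (α k₀).2) = g₂ (y + s.1 + (α k₀).1, u + (s.2 + (α k₀).2))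
      rw [add_assoc u]
    have e3 : ∑ u : Fin t → ZMod 2, g₂ ((y, u) + α k₀) = B (y + (α k₀).1) := by
      have := key (α k₀).2 (fun u => g₂ (y + (α k₀).1, u))
      simp only [hB]
      rw [← this]
      apply Finset.sum_congr rfl; intro u _; rfl
    rw [e1, e2, e3] at h1
    exact h1
  rw [hFAB, hFAB, hk, hsum]
end

section
/- Let 𝔽 be a field of characteristic 2, W an 𝔽₂-vector space, E₂, E₄ : 𝔽 → W arbitrary functions, k₁, k₃ ∈ 𝔽, and β₀, β₁ ∈ 𝔽 with β₀ ≠ β₁. Define PolyMAC(m₁, m₂) = E₂(k₁²m₁ + k₁m₂) + E₄(k₃²m₁ + k₃m₂) and f(α, x) = PolyMAC(β₀, x) + PolyMAC(β₁, x + α). Set s = (k₁ + k₃)(β₀ + β₁). If α = k₁(β₀ + β₁) or α = k₃(β₀ + β₁), then f(α, ·) has period s, i.e. f(α, x + s) = f(α, x) for every x ∈ 𝔽. -/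
/-- The XOR-type function `f(α, x) = PolyMAC(β₀, x) + PolyMAC(β₁, x + α)` built
from the two-block PolyMAC has period `s = (k₁ + k₃)(β₀ + β₁)` whenever
`α = k₁(β₀ + β₁)` or `α = k₃(β₀ + β₁)`. -/
theorem polyMAC_xor_type_period
    {F : Type*} [Field F] [CharP F 2]
    {W : Type*} [AddCommGroup W] [Module (ZMod 2) W]
    (E₂ E₄ : F → W) (k₁ k₃ : F) (β₀ β₁ : F) (hβ : β₀ ≠ β₁)
    (PolyMAC : F → F → W)
    (hP : ∀ m₁ m₂, PolyMAC m₁ m₂ =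
      E₂ (k₁ ^ 2 * m₁ + k₁ * m₂) + E₄ (k₃ ^ 2 * m₁ + k₃ * m₂))
    (f : F → F → W)
    (hf : ∀ α x, f α x = PolyMAC β₀ x + PolyMAC β₁ (x + α))
    (s : F) (hs : s = (k₁ + k₃) * (β₀ + β₁))
    (α : F) (hα : α = k₁ * (β₀ + β₁) ∨ α = k₃ * (β₀ + β₁)) :
    ∀ x : F, f α (x + s) = f α x := by
  intro x
  have h2 : (2 : F) = 0 := by exact_mod_cast (CharP.cast_eq_zero F 2)
  have hw : ∀ w : W, w + w = 0 := by
    intro w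
    have h : (2 : ZMod 2) • w = 0 := by
      rw [show (2 : ZMod 2) = 0 from rfl, zero_smul]
    rwa [two_smul] at h
  have key : ∀ u v a b : W, u + a + (u + b) = v + b + (v + a) := by
    intro u v a b
    have h1 : u + a + (u + b) = (u + u) + (a + b) := by abel
    have h2' : v + b + (v + a) = (v + v) + (a + b) := by abel
    rw [h1, h2', hw, hw]
  subst hs
  rcases hα with h | h <;> subst h <;> simp only [hf, hP]
  · have e1 : k₁ ^ 2 * β₀ + k₁ * (x + (k₁ + k₃) * (β₀ + β₁))
        = k₁ ^ 2 * β₁ + k₁ * (x + (k₁ + k₃) * (β₀ + β₁) + k₁ * (β₀ + β₁)) := by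
      linear_combination (-(k₁ ^ 2 * β₁)) * h2
    have e2 : k₁ ^ 2 * β₀ + k₁ * x
        = k₁ ^ 2 * β₁ + k₁ * (x + k₁ * (β₀ + β₁)) := by
      linear_combination (-(k₁ ^ 2 * β₁)) * h2
    have e3 : k₃ ^ 2 * β₀ + k₃ * (x + (k₁ + k₃) * (β₀ + β₁))
        = k₃ ^ 2 * β₁ + k₃ * (x + k₁ * (β₀ + β₁)) := by
      linear_combination (k₃ ^ 2 * β₀) * h2
    have e4 : k₃ ^ 2 * β₁ + k₃ * (x + (k₁ + k₃) * (β₀ + β₁) + k₁ * (β₀ + β₁))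
        = k₃ ^ 2 * β₀ + k₃ * x := by
      linear_combination (k₃ ^ 2 * β₁ + k₁ * k₃ * (β₀ + β₁)) * h2
    rw [e1, e2, e3, e4]
    exact key _ _ _ _
  · have e1 : k₃ ^ 2 * β₀ + k₃ * (x + (k₁ + k₃) * (β₀ + β₁))
        = k₃ ^ 2 * β₁ + k₃ * (x + (k₁ + k₃) * (β₀ + β₁) + k₃ * (β₀ + β₁)) := by
      linear_combination (-(k₃ ^ 2 * β₁)) * h2
    have e2 : k₃ ^ 2 * β₀ + k₃ * x
        = k₃ ^ 2 * β₁ + k₃ * (x + k₃ * (β₀ + β₁)) := by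
      linear_combination (-(k₃ ^ 2 * β₁)) * h2
    have e3 : k₁ ^ 2 * β₀ + k₁ * (x + (k₁ + k₃) * (β₀ + β₁))
        = k₁ ^ 2 * β₁ + k₁ * (x + k₃ * (β₀ + β₁)) := by
      linear_combination (k₁ ^ 2 * β₀) * h2
    have e4 : k₁ ^ 2 * β₁ + k₁ * (x + (k₁ + k₃) * (β₀ + β₁) + k₃ * (β₀ + β₁))
        = k₁ ^ 2 * β₀ + k₁ * x := by
      linear_combination (k₁ ^ 2 * β₁ + k₁ * k₃ * (β₀ + β₁)) * h2
    rw [e1, e2, e3, e4]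
    -- goal: E₂ a' + E₄ u + (E₂ b' + E₄ u) = E₂ b + E₄ v + (E₂ a + E₄ v)
    have key2 : ∀ a b u v : W, a + u + (b + u) = b + v + (a + v) := by
      intro a b u v
      have h1 : a + u + (b + u) = (u + u) + (a + b) := by abel
      have h2' : b + v + (a + v) = (v + v) + (a + b) := by abel
      rw [h1, h2', hw, hw]
    exact key2 _ _ _ _
end

section
/- Let 𝔽 be a finite field of characteristic 2, W an 𝔽₂-vector space, E₂, E₄ : 𝔽 → W arbitrary functions, k₁, k₃ ∈ 𝔽, and β₀, β₁ ∈ 𝔽 with β₀ ≠ β₁. Define PolyMAC(m₁, m₂) = E₂(k₁²m₁ + k₁m₂) + E₄(k₃²m₁ + k₃m₂) and f(α, x) = PolyMAC(β₀, x) + PolyMAC(β₁, x + α). Let L ⊆ 𝔽 be an 𝔽₂-linear subspace (the span of the low t bits), and write the period s = (k₁ + k₃)(β₀ + β₁) as s = s_U + s_L with s_L ∈ L. Then for any α ∈ 𝔽 with α + k₁(β₀ + β₁) ∈ L or α + k₃(β₀ + β₁) ∈ L, the truncated function F(y) = ∑_{u ∈ L} f(α, y + u) satisfies F(y + s_U)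 = F(y) for every y ∈ 𝔽. -/
private lemma addself_W {W : Type*} [AddCommGroup W] [Module (ZMod 2) W] (w : W) :
    w + w = 0 := by
  have h := two_smul (ZMod 2) w
  rw [show ((2 : ZMod 2)) = 0 by decide, zero_smul] at h
  exact h.symm

private lemma sum_shift {F : Type*} [Field F] [Fintype F] [Module (ZMod 2) F]
    {W : Type*} [AddCommGroup W]
    (L : Submodule (ZMod 2) F) [DecidablePred (· ∈ L)]
    (g : F → W) (l : F) (hl : l ∈ L) (y : F) :
    ∑ u : L, g (y + (u : F) + l) = ∑ u : L, g (y + (u : F)) := by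
  apply Fintype.sum_equiv (Equiv.addLeft (⟨l, hl⟩ : L))
  intro u
  simp [add_comm, add_assoc, add_left_comm]

private lemma main_aux {F : Type*} [Field F] [Fintype F] [CharP F 2] [Module (ZMod 2) F]
    {W : Type*} [AddCommGroup W] [Module (ZMod 2) W]
    (L : Submodule (ZMod 2) F) [DecidablePred (· ∈ L)]
    (A B : F → W) (c s sU sL : F) (hc : c ∈ L)
    (hsplit : s = sU + sL) (hsL : sL ∈ L)
    (Ftr : F → W)
    (hFtr : ∀ y, Ftr y = ∑ u : L, (A (y + (u:F)) + B (y + (u:F))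
        + (A (y + (u:F) + c) + B (y + (u:F) + s + c)))) :
    ∀ y : F, Ftr (y + sU) = Ftr y := by
  have h2 : (2 : F) = 0 := by
    have := CharP.cast_eq_zero F 2; simpa using this
  have key : ∀ y : F, Ftr y = (∑ u : L, B (y + (u:F))) + ∑ u : L, B ((y + s) + (u:F)) := by
    intro y
    rw [hFtr]
    simp only [Finset.sum_add_distrib]
    have e1 : ∑ u : L, A (y + (u:F) + c) = ∑ u : L, A (y + (u:F)) :=
      sum_shift L A c hc y
    have e2 : ∑ u : L, B (y + (u:F) + s + c) = ∑ u : L, B ((y + s) + (u:F)) := by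
      rw [show (fun u : L => B (y + (u:F) + s + c)) = fun u : L => B ((y+s) + (u:F) + c) by
        funext u; ring_nf]
      exact sum_shift L B c hc (y + s)
    rw [e1, e2]
    have cancel : ∀ a b b' : W, a + b + (a + b') = b + b' := by
      intro a b b'
      calc a + b + (a + b') = (a + a) + (b + b') := by abel
        _ = b + b' := by rw [addself_W, zero_add]
    exact cancel _ _ _
  intro y
  have hsU : sU = s + sL := by
    linear_combination -hsplit - sL * h2
  rw [key, key]
  have r1 : ∑ u : L, B (y + sU + (u:F)) = ∑ u : L, B ((y + s) + (u:F)) := by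
    rw [show (fun u : L => B (y + sU + (u:F))) = fun u : L => B ((y+s) + (u:F) + sL) by
      funext u; rw [hsU]; ring_nf]
    exact sum_shift L B sL hsL (y + s)
  have r2 : ∑ u : L, B ((y + sU + s) + (u:F)) = ∑ u : L, B (y + (u:F)) := by
    rw [show (fun u : L => B ((y + sU + s) + (u:F))) = fun u : L => B (y + (u:F) + sL) by
      funext u
      have : y + sU + s = y + sL := by rw [hsU]; linear_combination s * h2
      rw [this]; ring_nf]
    exact sum_shift L B sL hsL y
  rw [r1, r2, add_comm]

/-- Truncated version of the PolyMAC attack: XOR-summing the XOR-type function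
`f(α, x) = PolyMAC(β₀, x) + PolyMAC(β₁, x + α)` over an `𝔽₂`-subspace `L`
(the low `t` bits) yields a function with period `s_U`, the high part of
`s = (k₁ + k₃)(β₀ + β₁) = s_U + s_L` with `s_L ∈ L`, whenever the guess `α`
matches `k₁(β₀ + β₁)` or `k₃(β₀ + β₁)` up to an element of `L`. -/
theorem polyMAC_truncated_xor_type_period
    {F : Type*} [Field F] [Fintype F] [CharP F 2]
    [Module (ZMod 2) F]
    {W : Type*} [AddCommGroup W] [Module (ZMod 2) W]
    (E₂ E₄ : F → W) (k₁ k₃ : F) (β₀ β₁ : F) (hβ : β₀ ≠ β₁)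
    (PolyMAC : F → F → W)
    (hP : ∀ m₁ m₂, PolyMAC m₁ m₂ =
      E₂ (k₁ ^ 2 * m₁ + k₁ * m₂) + E₄ (k₃ ^ 2 * m₁ + k₃ * m₂))
    (f : F → F → W)
    (hf : ∀ α x, f α x = PolyMAC β₀ x + PolyMAC β₁ (x + α))
    (L : Submodule (ZMod 2) F) [DecidablePred (· ∈ L)]
    (s sU sL : F) (hs : s = (k₁ + k₃) * (β₀ + β₁))
    (hsplit : s = sU + sL) (hsL : sL ∈ L)
    (α : F) (hα : α + k₁ * (β₀ + β₁) ∈ L ∨ α + k₃ * (β₀ + β₁) ∈ L)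
    (Ftr : F → W)
    (hFtr : ∀ y, Ftr y = ∑ u : L, f α (y + (u : F))) :
    ∀ y : F, Ftr (y + sU) = Ftr y := by
  have h2 : (2 : F) = 0 := by
    have := CharP.cast_eq_zero F 2; simpa using this
  rcases hα with hc | hc
  · refine main_aux L (fun x => E₂ (k₁ ^ 2 * β₀ + k₁ * x))
      (fun x => E₄ (k₃ ^ 2 * β₀ + k₃ * x)) (α + k₁ * (β₀ + β₁)) s sU sL hc hsplit hsL Ftr ?_
    intro y
    rw [hFtr y]
    refine Finset.sum_congr rfl ?_
    intro u _
    rw [hf, hP, hP]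
    have e1 : k₁ ^ 2 * β₁ + k₁ * (y + (u:F) + α)
        = k₁ ^ 2 * β₀ + k₁ * (y + (u:F) + (α + k₁ * (β₀ + β₁))) := by
      linear_combination (-(k₁ ^ 2 * β₀)) * h2
    have e2 : k₃ ^ 2 * β₁ + k₃ * (y + (u:F) + α)
        = k₃ ^ 2 * β₀ + k₃ * (y + (u:F) + s + (α + k₁ * (β₀ + β₁))) := by
      linear_combination (-k₃) * hs + (-(k₃ ^ 2 * β₀) - k₃ * k₁ * (β₀ + β₁)) * h2
    rw [e1, e2]
  · refine main_aux L (fun x => E₄ (k₃ ^ 2 * β₀ + k₃ * x))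
      (fun x => E₂ (k₁ ^ 2 * β₀ + k₁ * x)) (α + k₃ * (β₀ + β₁)) s sU sL hc hsplit hsL Ftr ?_
    intro y
    rw [hFtr y]
    refine Finset.sum_congr rfl ?_
    intro u _
    rw [hf, hP, hP]
    have e1 : k₁ ^ 2 * β₁ + k₁ * (y + (u:F) + α)
        = k₁ ^ 2 * β₀ + k₁ * (y + (u:F) + s + (α + k₃ * (β₀ + β₁))) := by
      linear_combination (-k₁) * hs + (-(k₁ ^ 2 * β₀) - k₁ * k₃ * (β₀ + β₁)) * h2
    have e2 : k₃ ^ 2 * β₁ + k₃ * (y + (u:F) + α)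
        = k₃ ^ 2 * β₀ + k₃ * (y + (u:F) + (α + k₃ * (β₀ + β₁))) := by
      linear_combination (-(k₃ ^ 2 * β₀)) * h2
    rw [e1, e2]
    abel
end

section
/- Let V be an 𝔽₂-vector space, P₁, P₂ : V → V arbitrary functions, l₁₃, l₂₃ linear automorphisms of V, l₁₄, l₂₄, l₃₃, l₃₄ and e linear endomorphisms of V, C ∈ V, and k₁, k₂ ∈ V. Define g(x) = l₃₃(P₁(l₁₃(x) + l₁₄(k₁))) + l₃₄(P₂(l₂₃(x) + l₂₄(k₂))) + e(x) + C and f(i, x) = g(x) + e(x) + l₃₃(P₁(l₁₃(x))) + l₃₄(P₂(l₂₃(x + i))). Set s = l₁₃⁻¹(l₁₄(k₁)). If i = l₂₃⁻¹(l₂₄(k₂)) or i = l₂₃⁻¹(l₂₄(k₂)) + s, then f(i, ·) has period s, i.e. f(i, x + s) = f(i, x) for every x ∈ V. -/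
/-- The p-XOR-type function built from a TPP-PRF
`g(x) = l₃₃(P₁(l₁₃(x) + l₁₄(k₁))) + l₃₄(P₂(l₂₃(x) + l₂₄(k₂))) + e(x) + C`,
namely `f(i, x) = g(x) + e(x) + l₃₃(P₁(l₁₃(x))) + l₃₄(P₂(l₂₃(x + i)))`,
has period `s = l₁₃⁻¹(l₁₄(k₁))` when `i = l₂₃⁻¹(l₂₄(k₂))` or
`i = l₂₃⁻¹(l₂₄(k₂)) + s`. -/
theorem tpp_prf_p_xor_type_period
    {V : Type*} [AddCommGroup V] [Module (ZMod 2) V]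
    (P₁ P₂ : V → V)
    (l₁₃ l₂₃ : V ≃ₗ[ZMod 2] V)
    (l₁₄ l₂₄ l₃₃ l₃₄ e : V →ₗ[ZMod 2] V)
    (C : V) (k₁ k₂ : V)
    (g : V → V)
    (hg : ∀ x, g x = l₃₃ (P₁ (l₁₃ x + l₁₄ k₁)) + l₃₄ (P₂ (l₂₃ x + l₂₄ k₂))
      + e x + C)
    (f : V → V → V)
    (hf : ∀ i x, f i x = g x + e x + l₃₃ (P₁ (l₁₃ x)) + l₃₄ (P₂ (l₂₃ (x + i))))
    (s : V) (hs : s = l₁₃.symm (l₁₄ k₁))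
    (i : V) (hi : i = l₂₃.symm (l₂₄ k₂) ∨ i = l₂₃.symm (l₂₄ k₂) + s) :
    ∀ x : V, f i (x + s) = f i x := by
  have h2 : ∀ v : V, v + v = 0 := fun v => by
    have : (2 : ZMod 2) • v = 0 := by
      rw [show (2 : ZMod 2) = 0 from rfl, zero_smul]
    simpa [two_smul] using this
  have h2' : ∀ v : V, 2 • v = 0 := fun v => by rw [two_nsmul, h2]
  have h2z : ∀ v : V, (2 : ℤ) • v = 0 := fun v => by rw [two_zsmul, h2]
  intro x
  have hP1a : l₁₃ (x + s) + l₁₄ k₁ = l₁₃ x := by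
    simp [hs, map_add, add_assoc, h2]
  have hP1b : l₁₃ (x + s) = l₁₃ x + l₁₄ k₁ := by
    simp [hs, map_add]
  rcases hi with hi | hi
  · have hA : l₂₃ (x + s + i) = l₂₃ (x + s) + l₂₄ k₂ := by
      rw [hi]; simp [map_add]
    have hB : l₂₃ (x + i) = l₂₃ x + l₂₄ k₂ := by
      rw [hi]; simp [map_add]
    rw [hf, hf, hg, hg, hP1a, hP1b, hA, hB]
    abel_nf
    simp [h2', h2z]
  · have hx1 : x + s + i = x + l₂₃.symm (l₂₄ k₂) := by
      rw [hi]; abel_nf; simp [h2', h2z]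
    have hx2 : x + i = x + s + l₂₃.symm (l₂₄ k₂) := by
      rw [hi]; abel
    have hA : l₂₃ (x + s + i) = l₂₃ x + l₂₄ k₂ := by
      rw [hx1]; simp [map_add]
    have hB : l₂₃ (x + i) = l₂₃ (x + s) + l₂₄ k₂ := by
      rw [hx2]; simp [map_add]
    rw [hf, hf, hg, hg, hP1a, hP1b, hA, hB]
    abel_nf
    simp [h2', h2z]
end

section
/- Let V = V₁ × V₂ × V₃ with V₁ = 𝔽₂^p, V₂ = 𝔽₂^{n−t−p}, V₃ = 𝔽₂^{t}. Let P₁, P₂ : V → V be arbitrary functions, l₃₃, l₃₄ and e linear endomorphisms of V, C ∈ V, and k₁, k₂ ∈ V. Suppose l₁₃, l₂₃ are block-diagonal linear automorphisms of V (acting componentwise on the three factors, with each block invertible) and l₁₄, l₂₄ are block-diagonal linear endomorphisms of V. Define g(x) = l₃₃(P₁(l₁₃(x) + l₁₄(k₁))) + l₃₄(P₂(l₂₃(x) + l₂₄(k₂))) + e(x) + C, write s = l₁₃⁻¹(l₁₄(k₁)) = (s₁, s₂, s₃) and l₂₃⁻¹(l₂₄(k₂)) = (w₁, w₂, w₃),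 and for i = (i₁, i₂) ∈ V₁ × V₂, j ∈ V₂, y ∈ V₁ define F^L((i, j), y) = ∑_{u ∈ V₃} [ g(y, 0, u) + e(y, 0, u) + l₃₃(P₁(l₁₃(y, j, u))) + l₃₄(P₂(l₂₃((y, 0, u) + (i₁, i₂, 0)))) ]. If (i₁, i₂) = (w₁, w₂) and j = s₂, then F^L((i, j), ·) has period s₁: F^L((i, j), y + s₁) = F^L((i, j), y) for every y ∈ V₁. -/
private lemma zmod2_add_self {M : Type*} [AddCommGroup M] [Module (ZMod 2) M]
    (x : M) : x + x = 0 := by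
  have h : ((1 : ZMod 2) + 1) = 0 := by decide
  calc x + x = (1 : ZMod 2) • x + (1 : ZMod 2) • x := by rw [one_smul]
    _ = ((1 : ZMod 2) + 1) • x := (add_smul _ _ _).symm
    _ = 0 := by rw [h, zero_smul]

/-- Truncated attack function for a TPP-PRF with block-diagonal linear layers
`l₁₃, l₂₃` (automorphisms) and `l₁₄, l₂₄` (endomorphisms) on
`V = 𝔽₂^p × 𝔽₂^{n-t-p} × 𝔽₂^t`: writing `s = l₁₃⁻¹(l₁₄ k₁) = (s₁, s₂, s₃)` and
`l₂₃⁻¹(l₂₄ k₂) = (w₁, w₂, w₃)`, if the guesses satisfy `(i₁, i₂) = (w₁, w₂)`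
and `j = s₂`, then `F^L((i, j), ·)` has period `s₁`. -/
theorem tpp_prf_truncated_period
    {n t p : ℕ}
    (P₁ P₂ : (Fin p → ZMod 2) × (Fin (n - t - p) → ZMod 2) × (Fin t → ZMod 2) →
      (Fin p → ZMod 2) × (Fin (n - t - p) → ZMod 2) × (Fin t → ZMod 2))
    (l₃₃ l₃₄ e :
      ((Fin p → ZMod 2) × (Fin (n - t - p) → ZMod 2) × (Fin t → ZMod 2)) →ₗ[ZMod 2]
      ((Fin p → ZMod 2) × (Fin (n - t - p) → ZMod 2) × (Fin t → ZMod 2)))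
    (C k₁ k₂ : (Fin p → ZMod 2) × (Fin (n - t - p) → ZMod 2) × (Fin t → ZMod 2))
    -- the block-diagonal automorphism `l₁₃` with blocks `a₁, a₂, a₃`
    (a₁ : (Fin p → ZMod 2) ≃ₗ[ZMod 2] (Fin p → ZMod 2))
    (a₂ : (Fin (n - t - p) → ZMod 2) ≃ₗ[ZMod 2] (Fin (n - t - p) → ZMod 2))
    (a₃ : (Fin t → ZMod 2) ≃ₗ[ZMod 2] (Fin t → ZMod 2))
    (l₁₃ : ((Fin p → ZMod 2) × (Fin (n - t - p) → ZMod 2) × (Fin t → ZMod 2)) ≃ₗ[ZMod 2]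
      ((Fin p → ZMod 2) × (Fin (n - t - p) → ZMod 2) × (Fin t → ZMod 2)))
    (hl₁₃ : ∀ x, l₁₃ x = (a₁ x.1, a₂ x.2.1, a₃ x.2.2))
    -- the block-diagonal automorphism `l₂₃` with blocks `b₁, b₂, b₃`
    (b₁ : (Fin p → ZMod 2) ≃ₗ[ZMod 2] (Fin p → ZMod 2))
    (b₂ : (Fin (n - t - p) → ZMod 2) ≃ₗ[ZMod 2] (Fin (n - t - p) → ZMod 2))
    (b₃ : (Fin t → ZMod 2) ≃ₗ[ZMod 2] (Fin t → ZMod 2))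
    (l₂₃ : ((Fin p → ZMod 2) × (Fin (n - t - p) → ZMod 2) × (Fin t → ZMod 2)) ≃ₗ[ZMod 2]
      ((Fin p → ZMod 2) × (Fin (n - t - p) → ZMod 2) × (Fin t → ZMod 2)))
    (hl₂₃ : ∀ x, l₂₃ x = (b₁ x.1, b₂ x.2.1, b₃ x.2.2))
    -- the block-diagonal endomorphism `l₁₄` with blocks `c₁, c₂, c₃`
    (c₁ : (Fin p → ZMod 2) →ₗ[ZMod 2] (Fin p → ZMod 2))
    (c₂ : (Fin (n - t - p) → ZMod 2) →ₗ[ZMod 2] (Fin (n - t - p) → ZMod 2))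
    (c₃ : (Fin t → ZMod 2) →ₗ[ZMod 2] (Fin t → ZMod 2))
    (l₁₄ : ((Fin p → ZMod 2) × (Fin (n - t - p) → ZMod 2) × (Fin t → ZMod 2)) →ₗ[ZMod 2]
      ((Fin p → ZMod 2) × (Fin (n - t - p) → ZMod 2) × (Fin t → ZMod 2)))
    (hl₁₄ : ∀ x, l₁₄ x = (c₁ x.1, c₂ x.2.1, c₃ x.2.2))
    -- the block-diagonal endomorphism `l₂₄` with blocks `d₁, d₂, d₃`
    (d₁ : (Fin p → ZMod 2) →ₗ[ZMod 2] (Fin p → ZMod 2))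
    (d₂ : (Fin (n - t - p) → ZMod 2) →ₗ[ZMod 2] (Fin (n - t - p) → ZMod 2))
    (d₃ : (Fin t → ZMod 2) →ₗ[ZMod 2] (Fin t → ZMod 2))
    (l₂₄ : ((Fin p → ZMod 2) × (Fin (n - t - p) → ZMod 2) × (Fin t → ZMod 2)) →ₗ[ZMod 2]
      ((Fin p → ZMod 2) × (Fin (n - t - p) → ZMod 2) × (Fin t → ZMod 2)))
    (hl₂₄ : ∀ x, l₂₄ x = (d₁ x.1, d₂ x.2.1, d₃ x.2.2))
    -- the TPP-PRF `g`
    (g : (Fin p → ZMod 2) × (Fin (n - t - p) → ZMod 2) × (Fin t → ZMod 2) →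
      (Fin p → ZMod 2) × (Fin (n - t - p) → ZMod 2) × (Fin t → ZMod 2))
    (hg : ∀ x, g x = l₃₃ (P₁ (l₁₃ x + l₁₄ k₁)) + l₃₄ (P₂ (l₂₃ x + l₂₄ k₂))
      + e x + C)
    -- the components of the secret states
    (s₁ : Fin p → ZMod 2) (s₂ : Fin (n - t - p) → ZMod 2) (s₃ : Fin t → ZMod 2)
    (hs : l₁₃.symm (l₁₄ k₁) = (s₁, s₂, s₃))
    (w₁ : Fin p → ZMod 2) (w₂ : Fin (n - t - p) → ZMod 2) (w₃ : Fin t → ZMod 2)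
    (hw : l₂₃.symm (l₂₄ k₂) = (w₁, w₂, w₃))
    -- the truncated attack function `F^L`
    (FL : ((Fin p → ZMod 2) × (Fin (n - t - p) → ZMod 2)) × (Fin (n - t - p) → ZMod 2) →
      (Fin p → ZMod 2) →
      (Fin p → ZMod 2) × (Fin (n - t - p) → ZMod 2) × (Fin t → ZMod 2))
    (hFL : ∀ i₁ i₂ j y, FL ((i₁, i₂), j) y =
      ∑ u : Fin t → ZMod 2,
        (g (y, 0, u) + e (y, 0, u) + l₃₃ (P₁ (l₁₃ (y, j, u)))
          + l₃₄ (P₂ (l₂₃ ((y, (0 : Fin (n - t - p) → ZMod 2), u)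
              + (i₁, i₂, (0 : Fin t → ZMod 2)))))))
    (i₁ : Fin p → ZMod 2) (i₂ j : Fin (n - t - p) → ZMod 2)
    (hi : i₁ = w₁ ∧ i₂ = w₂) (hj : j = s₂) :
    ∀ y : Fin p → ZMod 2, FL ((i₁, i₂), j) (y + s₁) = FL ((i₁, i₂), j) y := by
  classical
  obtain ⟨hi1, hi2⟩ := hi
  subst hi1; subst hi2; subst hj
  have hk₁ : l₁₄ k₁ = l₁₃ (s₁, j, s₃) := by
    rw [← hs]; simp
  have hk₂ : l₂₄ k₂ = l₂₃ (i₁, i₂, w₃) := by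
    rw [← hw]; simp
  have harg1 : ∀ (y' : Fin p → ZMod 2) (u : Fin t → ZMod 2),
      l₁₃ (y', (0 : Fin (n - t - p) → ZMod 2), u) + l₁₄ k₁
        = l₁₃ (y' + s₁, j, u + s₃) := by
    intro y' u
    rw [hk₁, ← map_add]
    congr 1
    simp [Prod.ext_iff]
  have harg2 : ∀ (y' : Fin p → ZMod 2) (u : Fin t → ZMod 2),
      l₂₃ (y', (0 : Fin (n - t - p) → ZMod 2), u) + l₂₄ k₂
        = l₂₃ (y' + i₁, i₂, u + w₃) := by
    intro y' u
    rw [hk₂, ← map_add]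
    congr 1
    simp [Prod.ext_iff]
  have harg3 : ∀ (y' : Fin p → ZMod 2) (u : Fin t → ZMod 2),
      ((y', (0 : Fin (n - t - p) → ZMod 2), u)
        + (i₁, i₂, (0 : Fin t → ZMod 2)))
        = ((y' + i₁, i₂, u) :
          (Fin p → ZMod 2) × (Fin (n - t - p) → ZMod 2) × (Fin t → ZMod 2)) := by
    intro y' u
    simp [Prod.ext_iff]
  have key : ∀ y' : Fin p → ZMod 2,
      FL ((i₁, i₂), j) y'
        = (∑ u : Fin t → ZMod 2, l₃₃ (P₁ (l₁₃ (y' + s₁, j, u))))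
          + (∑ u : Fin t → ZMod 2, l₃₃ (P₁ (l₁₃ (y', j, u))))
          + ∑ _u : Fin t → ZMod 2, C := by
    intro y'
    rw [hFL]
    have hpt : ∀ u : Fin t → ZMod 2,
        (g (y', 0, u) + e (y', 0, u) + l₃₃ (P₁ (l₁₃ (y', j, u)))
          + l₃₄ (P₂ (l₂₃ ((y', (0 : Fin (n - t - p) → ZMod 2), u)
              + (i₁, i₂, (0 : Fin t → ZMod 2))))))
        = (l₃₃ (P₁ (l₁₃ (y' + s₁, j, u + s₃)))
            + l₃₄ (P₂ (l₂₃ (y' + i₁, i₂, u + w₃))))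
          + (l₃₃ (P₁ (l₁₃ (y', j, u)))
            + l₃₄ (P₂ (l₂₃ (y' + i₁, i₂, u)))) + C := by
      intro u
      rw [hg, harg1, harg2, harg3]
      rw [show
        l₃₃ (P₁ (l₁₃ (y' + s₁, j, u + s₃))) + l₃₄ (P₂ (l₂₃ (y' + i₁, i₂, u + w₃)))
          + e (y', 0, u) + C + e (y', 0, u) + l₃₃ (P₁ (l₁₃ (y', j, u)))
          + l₃₄ (P₂ (l₂₃ ((y' + i₁, i₂, u))))
        = (l₃₃ (P₁ (l₁₃ (y' + s₁, j, u + s₃)))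
            + l₃₄ (P₂ (l₂₃ (y' + i₁, i₂, u + w₃))))
          + (l₃₃ (P₁ (l₁₃ (y', j, u)))
            + l₃₄ (P₂ (l₂₃ (y' + i₁, i₂, u)))) + C
          + (e (y', 0, u) + e (y', 0, u)) from by abel]
      rw [zmod2_add_self, add_zero]
    rw [Finset.sum_congr rfl (fun u _ => hpt u)]
    simp only [Finset.sum_add_distrib]
    have e1 : (∑ u : Fin t → ZMod 2, l₃₃ (P₁ (l₁₃ (y' + s₁, j, u + s₃))))
        = ∑ u : Fin t → ZMod 2, l₃₃ (P₁ (l₁₃ (y' + s₁, j, u))) :=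
      Fintype.sum_equiv (Equiv.addRight s₃)
        (fun u => l₃₃ (P₁ (l₁₃ (y' + s₁, j, u + s₃))))
        (fun u => l₃₃ (P₁ (l₁₃ (y' + s₁, j, u)))) (fun u => rfl)
    have e2 : (∑ u : Fin t → ZMod 2, l₃₄ (P₂ (l₂₃ (y' + i₁, i₂, u + w₃))))
        = ∑ u : Fin t → ZMod 2, l₃₄ (P₂ (l₂₃ (y' + i₁, i₂, u))) :=
      Fintype.sum_equiv (Equiv.addRight w₃)
        (fun u => l₃₄ (P₂ (l₂₃ (y' + i₁, i₂, u + w₃))))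
        (fun u => l₃₄ (P₂ (l₂₃ (y' + i₁, i₂, u)))) (fun u => rfl)
    rw [e1, e2]
    have e3 := zmod2_add_self (∑ u : Fin t → ZMod 2, l₃₄ (P₂ (l₂₃ (y' + i₁, i₂, u))))
    generalize h1 : (∑ u : Fin t → ZMod 2, l₃₃ (P₁ (l₁₃ (y' + s₁, j, u)))) = A at *
    generalize h2 : (∑ u : Fin t → ZMod 2, l₃₃ (P₁ (l₁₃ (y', j, u)))) = A' at *
    generalize h3 : (∑ u : Fin t → ZMod 2, l₃₄ (P₂ (l₂₃ (y' + i₁, i₂, u)))) = B at *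
    rw [show A + B + (A' + B) + (∑ _u : Fin t → ZMod 2, C) = A + A' + (∑ _u : Fin t → ZMod 2, C) + (B + B) from by abel, e3, add_zero]
  intro y
  rw [key, key]
  have hy : y + s₁ + s₁ = y := by
    rw [add_assoc, zmod2_add_self, add_zero]
  rw [hy]
  abel
end

section
/- Let V = 𝔽₂^n, let P₁, P₂ be permutations of V, and let k₁, k₂, k₃, k₄ ∈ V. Define XopEM(x) = P₁(x + k₁) + P₂(x + k₃) + k₂ + k₄ and f(i, x) = XopEM(x) + P₁(x) + P₂(x + i). If i = k₃ or i = k₁ + k₃, then f(i, ·) has period k₁, i.e. f(i, x + k₁) = f(i, x) for every x ∈ V. -/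
/-- The p-XOR-type function `f(i, x) = XopEM(x) + P₁(x) + P₂(x + i)` built from
`XopEM(x) = P₁(x + k₁) + P₂(x + k₃) + k₂ + k₄` has period `k₁` when `i = k₃`
or `i = k₁ + k₃`. -/
theorem xopEM_p_xor_type_period
    {n : ℕ}
    (P₁ P₂ : Equiv.Perm (Fin n → ZMod 2))
    (k₁ k₂ k₃ k₄ : Fin n → ZMod 2)
    (XopEM : (Fin n → ZMod 2) → (Fin n → ZMod 2))
    (hX : ∀ x, XopEM x = P₁ (x + k₁) + P₂ (x + k₃) + k₂ + k₄)
    (f : (Fin n → ZMod 2) → (Fin n → ZMod 2) → (Fin n → ZMod 2))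
    (hf : ∀ i x, f i x = XopEM x + P₁ x + P₂ (x + i))
    (i : Fin n → ZMod 2) (hi : i = k₃ ∨ i = k₁ + k₃) :
    ∀ x : Fin n → ZMod 2, f i (x + k₁) = f i x := by
  have h2 : ∀ v : Fin n → ZMod 2, v + v = 0 := fun v => by
    funext j; exact CharTwo.add_self_eq_zero (v j)
  have hkk : ∀ x : Fin n → ZMod 2, x + k₁ + k₁ = x := fun x => by
    rw [add_assoc, h2, add_zero]
  rcases hi with rfl | rfl <;> intro x
  · simp only [hf, hX, hkk]
    rw [← sub_eq_zero]
    abel_nf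
    simp [two_smul, h2]
  · have h1 : x + k₁ + (k₁ + k₃) = x + k₃ := by rw [← add_assoc, hkk]
    simp only [hf, hX, hkk, h1]
    rw [← sub_eq_zero]
    abel_nf
end

section
/- Let V = 𝔽₂^n, let P₁, P₂ be permutations of V, and let k₁, k₂ ∈ V. Define SoEM22(x) = P₁(x + k₁) + P₂(x + k₂) + k₁ + k₂ and f(i, x) = SoEM22(x) + P₁(x) + P₂(x + i). If i = k₂ or i = k₁ + k₂, then f(i, ·) has period k₁, i.e. f(i, x + k₁) = f(i, x) for every x ∈ V. -/
/-- The p-XOR-type function `f(i, x) = SoEM22(x) + P₁(x) + P₂(x + i)` built from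
`SoEM22(x) = P₁(x + k₁) + P₂(x + k₂) + k₁ + k₂` has period `k₁` when `i = k₂`
or `i = k₁ + k₂`. -/
theorem soEM22_p_xor_type_period
    {n : ℕ}
    (P₁ P₂ : Equiv.Perm (Fin n → ZMod 2))
    (k₁ k₂ : Fin n → ZMod 2)
    (SoEM22 : (Fin n → ZMod 2) → (Fin n → ZMod 2))
    (hS : ∀ x, SoEM22 x = P₁ (x + k₁) + P₂ (x + k₂) + k₁ + k₂)
    (f : (Fin n → ZMod 2) → (Fin n → ZMod 2) → (Fin n → ZMod 2))
    (hf : ∀ i x, f i x = SoEM22 x + P₁ x + P₂ (x + i))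
    (i : Fin n → ZMod 2) (hi : i = k₂ ∨ i = k₁ + k₂) :
    ∀ x : Fin n → ZMod 2, f i (x + k₁) = f i x := by
  intro x
  have h2 : ∀ a : Fin n → ZMod 2, a + a = 0 := fun a => funext fun j => CharTwo.add_self_eq_zero (a j)
  rcases hi with rfl | rfl <;>
  · simp only [hf, hS]
    rw [show x + k₁ + k₁ = x by rw [add_assoc, h2, add_zero]]
    abel_nf
    simp only [two_smul, h2, add_zero, zero_add]
end

section
/- Fix n > d ≥ 1 and identify 𝔽₂^n with 𝔽₂^{n−d} × 𝔽₂^{d}. Let P be a permutation of 𝔽₂^{n−d} × 𝔽₂^{d}, let k₁, k₂ ∈ 𝔽₂^n have most-significant parts a = msb_{n−d}(k₁), b = msb_{n−d}(k₂) ∈ 𝔽₂^{n−d}, and define DS-SoEM(x) = P(x + a, 0) + P(x + b, 1) + k₁ + k₂ for x ∈ 𝔽₂^{n−d}, where 0 and 1 denote the all-zeros and all-ones vectors of 𝔽₂^{d}. Define f(i, x) = DS-SoEM(x) + P(x, 0) + P(x + i, 1). If i = b, then f(i, ·) has period a, i.e. f(i, x + a) = f(i, x) for every x ∈ 𝔽₂^{n−d}.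 -/
/-- The p-XOR-type function `f(i, x) = DS-SoEM(x) + P(x, 0) + P(x + i, 1)` built
from the domain-separated Sum-of-Even-Mansour cipher
`DS-SoEM(x) = P(x + a, 0) + P(x + b, 1) + k₁ + k₂`, where
`a = msb_{n-d}(k₁)` and `b = msb_{n-d}(k₂)`, has period `a` when `i = b`. -/
theorem ds_soEM_p_xor_type_period
    {n d : ℕ} (hd : 1 ≤ d) (hdn : d < n)
    (P : Equiv.Perm ((Fin (n - d) → ZMod 2) × (Fin d → ZMod 2)))
    (k₁ k₂ : (Fin (n - d) → ZMod 2) × (Fin d → ZMod 2))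
    (a b : Fin (n - d) → ZMod 2) (ha : a = k₁.1) (hb : b = k₂.1)
    (DSSoEM : (Fin (n - d) → ZMod 2) →
      (Fin (n - d) → ZMod 2) × (Fin d → ZMod 2))
    (hDS : ∀ x, DSSoEM x =
      P (x + a, (0 : Fin d → ZMod 2)) + P (x + b, fun _ => 1) + k₁ + k₂)
    (f : (Fin (n - d) → ZMod 2) → (Fin (n - d) → ZMod 2) →
      (Fin (n - d) → ZMod 2) × (Fin d → ZMod 2))
    (hf : ∀ i x, f i x = DSSoEM x + P (x, (0 : Fin d → ZMod 2))
      + P (x + i, fun _ => 1))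
    (i : Fin (n - d) → ZMod 2) (hi : i = b) :
    ∀ x : Fin (n - d) → ZMod 2, f i (x + a) = f i x := by
  intro x
  have haa : x + a + a = x := by
    funext j
    show x j + a j + a j = x j
    rw [add_assoc, CharTwo.add_self_eq_zero, add_zero]
  have h2 : ∀ v : (Fin (n - d) → ZMod 2) × (Fin d → ZMod 2),
      2 • v = 0 := by
    intro v
    rw [two_nsmul]
    ext j <;> exact CharTwo.add_self_eq_zero _
  have h2' : ∀ v : (Fin (n - d) → ZMod 2) × (Fin d → ZMod 2),
      2 * v = 0 := by
    intro v
    rw [two_mul]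
    ext j <;> exact CharTwo.add_self_eq_zero _
  simp only [hf, hDS, hi, haa, add_assoc]
  abel_nf
  simp [h2, h2']
end

section
/- Let V = V₁ × V₂ × V₃ with V₁ = 𝔽₂^p, V₂ = 𝔽₂^{n−t−p}, V₃ = 𝔽₂^{t}, let P₁, P₂ be permutations of V, and let k₁ = (k₁¹, k₁², k₁³), k₂, k₃ = (k₃¹, k₃², k₃³), k₄ ∈ V. Define XopEM(x) = P₁(x + k₁) + P₂(x + k₃) + k₂ + k₄, and for i = (i₁, i₂) ∈ V₁ × V₂, j ∈ V₂, y ∈ V₁ define F^L((i, j), y) = ∑_{u ∈ V₃} [ XopEM(y, 0, u) + P₁(y, j, u) + P₂(y + i₁, i₂, u) ]. If (i₁, i₂) = (k₃¹, k₃²) and j = k₁², then F^L((i, j), ·) has period k₁¹: F^L((i, j), y + k₁¹) = F^L((i, j), y) for every y ∈ V₁. -/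
/-- Truncated attack function for XopEM on `V = 𝔽₂^p × 𝔽₂^{n-t-p} × 𝔽₂^t`:
`F^L((i, j), y) = ∑_{u} [XopEM(y, 0, u) + P₁(y, j, u) + P₂(y + i₁, i₂, u)]`
has period `k₁¹` (the high `p` bits of `k₁`) when `(i₁, i₂) = (k₃¹, k₃²)`
and `j = k₁²`. -/
theorem xopEM_truncated_period
    {n t p : ℕ}
    (P₁ P₂ : Equiv.Perm
      ((Fin p → ZMod 2) × (Fin (n - t - p) → ZMod 2) × (Fin t → ZMod 2)))
    (k₁ k₂ k₃ k₄ : (Fin p → ZMod 2) × (Fin (n - t - p) → ZMod 2) × (Fin t → ZMod 2))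
    (k₁1 : Fin p → ZMod 2) (k₁2 : Fin (n - t - p) → ZMod 2) (k₁3 : Fin t → ZMod 2)
    (hk₁ : k₁ = (k₁1, k₁2, k₁3))
    (k₃1 : Fin p → ZMod 2) (k₃2 : Fin (n - t - p) → ZMod 2) (k₃3 : Fin t → ZMod 2)
    (hk₃ : k₃ = (k₃1, k₃2, k₃3))
    (XopEM : (Fin p → ZMod 2) × (Fin (n - t - p) → ZMod 2) × (Fin t → ZMod 2) →
      (Fin p → ZMod 2) × (Fin (n - t - p) → ZMod 2) × (Fin t → ZMod 2))
    (hX : ∀ x, XopEM x = P₁ (x + k₁) + P₂ (x + k₃) + k₂ + k₄)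
    (FL : ((Fin p → ZMod 2) × (Fin (n - t - p) → ZMod 2)) × (Fin (n - t - p) → ZMod 2) →
      (Fin p → ZMod 2) →
      (Fin p → ZMod 2) × (Fin (n - t - p) → ZMod 2) × (Fin t → ZMod 2))
    (hFL : ∀ i₁ i₂ j y, FL ((i₁, i₂), j) y =
      ∑ u : Fin t → ZMod 2,
        (XopEM (y, (0 : Fin (n - t - p) → ZMod 2), u) + P₁ (y, j, u)
          + P₂ (y + i₁, i₂, u)))
    (i₁ : Fin p → ZMod 2) (i₂ j : Fin (n - t - p) → ZMod 2)
    (hi : i₁ = k₃1 ∧ i₂ = k₃2) (hj : j = k₁2) :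
    ∀ y : Fin p → ZMod 2, FL ((i₁, i₂), j) (y + k₁1) = FL ((i₁, i₂), j) y := by
  obtain ⟨hi1, hi2⟩ := hi
  subst hi1; subst hi2; subst hj; subst hk₁; subst hk₃
  intro y
  have hself : ∀ v : (Fin p → ZMod 2) × (Fin (n - t - p) → ZMod 2) × (Fin t → ZMod 2),
      v + v = 0 := by
    intro v
    have h2 : ∀ m (w : Fin m → ZMod 2), w + w = 0 := by
      intro m w
      funext x
      exact CharTwo.add_self_eq_zero _
    obtain ⟨a, b, c⟩ := v
    show (a + a, b + b, c + c) = (0, 0, 0)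
    rw [h2, h2, h2]
  set S : (Fin p → ZMod 2) → (Fin p → ZMod 2) × (Fin (n - t - p) → ZMod 2) × (Fin t → ZMod 2)
    := fun z => ∑ u : Fin t → ZMod 2, P₁ (z, j, u) with hS
  have key : ∀ z : Fin p → ZMod 2, FL ((i₁, i₂), j) z
      = S (z + k₁1) + S z + ∑ _u : Fin t → ZMod 2, (k₂ + k₄) := by
    intro z
    rw [hFL]
    simp only [hX, Prod.mk_add_mk, zero_add]
    rw [Finset.sum_add_distrib, Finset.sum_add_distrib, Finset.sum_add_distrib,
      Finset.sum_add_distrib, Finset.sum_add_distrib]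
    have hA : ∑ u : Fin t → ZMod 2, P₁ (z + k₁1, j, u + k₁3) = S (z + k₁1) := by
      exact Fintype.sum_equiv (Equiv.addRight k₁3)
        (fun u => P₁ (z + k₁1, j, u + k₁3)) (fun u => P₁ (z + k₁1, j, u))
        (fun u => rfl)
    have hB : ∑ u : Fin t → ZMod 2, P₂ (z + i₁, i₂, u + k₃3)
        = ∑ u : Fin t → ZMod 2, P₂ (z + i₁, i₂, u) := by
      exact Fintype.sum_equiv (Equiv.addRight k₃3)
        (fun u => P₂ (z + i₁, i₂, u + k₃3)) (fun u => P₂ (z + i₁, i₂, u))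
        (fun u => rfl)
    rw [hA, hB]
    calc S (z + k₁1) + (∑ u : Fin t → ZMod 2, P₂ (z + i₁, i₂, u))
          + (∑ _u : Fin t → ZMod 2, k₂) + (∑ _u : Fin t → ZMod 2, k₄)
          + S z + (∑ u : Fin t → ZMod 2, P₂ (z + i₁, i₂, u))
        = S (z + k₁1) + S z
          + ((∑ _u : Fin t → ZMod 2, k₂) + (∑ _u : Fin t → ZMod 2, k₄))
          + ((∑ u : Fin t → ZMod 2, P₂ (z + i₁, i₂, u))
            + (∑ u : Fin t → ZMod 2, P₂ (z + i₁, i₂, u))) := by abel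
      _ = S (z + k₁1) + S z + ∑ _u : Fin t → ZMod 2, (k₂ + k₄) := by
          rw [hself, add_zero, ← Finset.sum_add_distrib, ← Finset.sum_add_distrib]
  rw [key, key]
  have hyy : y + k₁1 + k₁1 = y := by
    rw [add_assoc]
    have h0 : k₁1 + k₁1 = 0 := by
      funext x; exact CharTwo.add_self_eq_zero _
    rw [h0, add_zero]
  rw [hyy, add_comm (S y) (S (y + k₁1))]
end

section
/- Let V = V₁ × V₂ × V₃ with V₁ = 𝔽₂^p, V₂ = 𝔽₂^{n−t−p}, V₃ = 𝔽₂^{t}, let P₁, P₂ be permutations of V, and let k₁ = (k₁¹, k₁², k₁³), k₂ = (k₂¹, k₂², k₂³) ∈ V. Define SoEM22(x) = P₁(x + k₁) + P₂(x + k₂) + k₁ + k₂, and for i = (i₁, i₂) ∈ V₁ × V₂, j ∈ V₂, y ∈ V₁ define F^L((i, j), y) = ∑_{u ∈ V₃} [ SoEM22(y, 0, u) + P₁(y, j, u) + P₂(y + i₁, i₂, u) ]. If (i₁, i₂) = (k₂¹, k₂²) and j = k₁², then F^L((i, j), ·) has period k₁¹: F^L((i, j), y + k₁¹) = F^L((i,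 j), y) for every y ∈ V₁. -/
set_option maxHeartbeats 1000000 in
/-- Truncated attack function for SoEM22 on `V = 𝔽₂^p × 𝔽₂^{n-t-p} × 𝔽₂^t`:
`F^L((i, j), y) = ∑_{u} [SoEM22(y, 0, u) + P₁(y, j, u) + P₂(y + i₁, i₂, u)]`
has period `k₁¹` (the high `p` bits of `k₁`) when `(i₁, i₂) = (k₂¹, k₂²)`
and `j = k₁²`. -/
theorem soEM22_truncated_period
    {n t p : ℕ}
    (P₁ P₂ : Equiv.Perm
      ((Fin p → ZMod 2) × (Fin (n - t - p) → ZMod 2) × (Fin t → ZMod 2)))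
    (k₁ k₂ : (Fin p → ZMod 2) × (Fin (n - t - p) → ZMod 2) × (Fin t → ZMod 2))
    (k₁1 : Fin p → ZMod 2) (k₁2 : Fin (n - t - p) → ZMod 2) (k₁3 : Fin t → ZMod 2)
    (hk₁ : k₁ = (k₁1, k₁2, k₁3))
    (k₂1 : Fin p → ZMod 2) (k₂2 : Fin (n - t - p) → ZMod 2) (k₂3 : Fin t → ZMod 2)
    (hk₂ : k₂ = (k₂1, k₂2, k₂3))
    (SoEM22 : (Fin p → ZMod 2) × (Fin (n - t - p) → ZMod 2) × (Fin t → ZMod 2) →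
      (Fin p → ZMod 2) × (Fin (n - t - p) → ZMod 2) × (Fin t → ZMod 2))
    (hS : ∀ x, SoEM22 x = P₁ (x + k₁) + P₂ (x + k₂) + k₁ + k₂)
    (FL : ((Fin p → ZMod 2) × (Fin (n - t - p) → ZMod 2)) × (Fin (n - t - p) → ZMod 2) →
      (Fin p → ZMod 2) →
      (Fin p → ZMod 2) × (Fin (n - t - p) → ZMod 2) × (Fin t → ZMod 2))
    (hFL : ∀ i₁ i₂ j y, FL ((i₁, i₂), j) y =
      ∑ u : Fin t → ZMod 2,
        (SoEM22 (y, (0 : Fin (n - t - p) → ZMod 2), u) + P₁ (y, j, u)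
          + P₂ (y + i₁, i₂, u)))
    (i₁ : Fin p → ZMod 2) (i₂ j : Fin (n - t - p) → ZMod 2)
    (hi : i₁ = k₂1 ∧ i₂ = k₂2) (hj : j = k₁2) :
    ∀ y : Fin p → ZMod 2, FL ((i₁, i₂), j) (y + k₁1) = FL ((i₁, i₂), j) y := by
  obtain ⟨hi1, hi2⟩ := hi
  subst hi1 hi2 hj hk₁ hk₂
  intro y
  have hshift : ∀ (f : (Fin t → ZMod 2) →
      (Fin p → ZMod 2) × (Fin (n - t - p) → ZMod 2) × (Fin t → ZMod 2))
      (c : Fin t → ZMod 2),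
      ∑ u : Fin t → ZMod 2, f (u + c) = ∑ u : Fin t → ZMod 2, f u :=
    fun f c => Fintype.sum_equiv (Equiv.addRight c) _ _ (fun u => rfl)
  have key : ∀ z : Fin p → ZMod 2, FL ((i₁, i₂), j) z =
      (∑ u : Fin t → ZMod 2, P₁ (z + k₁1, j, u)) +
      (∑ u : Fin t → ZMod 2, P₁ (z, j, u)) +
      (∑ _u : Fin t → ZMod 2,
        (((k₁1, j, k₁3) : (Fin p → ZMod 2) × (Fin (n - t - p) → ZMod 2) × (Fin t → ZMod 2))
          + (i₁, i₂, k₂3))) := by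
    intro z
    rw [hFL]
    simp only [hS, Prod.mk_add_mk, zero_add]
    rw [Finset.sum_add_distrib, Finset.sum_add_distrib, Finset.sum_add_distrib,
      Finset.sum_add_distrib, Finset.sum_add_distrib]
    rw [hshift (fun u => P₁ (z + k₁1, j, u)) k₁3,
      hshift (fun u => P₂ (z + i₁, i₂, u)) k₂3]
    have haa : ∀ (a : (Fin p → ZMod 2) × (Fin (n - t - p) → ZMod 2) × (Fin t → ZMod 2)),
        a + a = 0 := by
      rintro ⟨a, b, c⟩
      simp [Prod.ext_iff, funext_iff, CharTwo.add_self_eq_zero]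
    abel_nf
    rw [two_smul, haa, zero_add]
    have hconst : ∑ _x : Fin t → ZMod 2,
        (((k₁1 + i₁, j + i₂, k₁3 + k₂3) :
          (Fin p → ZMod 2) × (Fin (n - t - p) → ZMod 2) × (Fin t → ZMod 2))) =
        (∑ _x : Fin t → ZMod 2, (((k₁1, j, k₁3) :
          (Fin p → ZMod 2) × (Fin (n - t - p) → ZMod 2) × (Fin t → ZMod 2))))
        + ∑ _x : Fin t → ZMod 2, (((i₁, i₂, k₂3) :
          (Fin p → ZMod 2) × (Fin (n - t - p) → ZMod 2) × (Fin t → ZMod 2))) := by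
      rw [← Finset.sum_add_distrib]
      simp [Prod.mk_add_mk]
    rw [hconst]
    abel
  have hyy : y + k₁1 + k₁1 = y := by
    funext x
    show y x + k₁1 x + k₁1 x = y x
    rw [add_assoc, CharTwo.add_self_eq_zero, add_zero]
  rw [key, key, hyy]
  abel
end

section
/- Let V = V₁ × V₂ × V₃ with V₁ = 𝔽₂^p, V₂ = 𝔽₂^{n−t−p}, V₃ = 𝔽₂^{t}, let P be a permutation of V with inverse P⁻¹, and let k₁ = (k₁¹, k₁², k₁³), k₂ = (k₂¹, k₂², k₂³) ∈ V. Define SUMPIP(x) = P(x + k₁) + P⁻¹(x + k₂) + k₁ + k₂, and for i = (i₁, i₂) ∈ V₁ × V₂, j ∈ V₂, y ∈ V₁ define F^L((i, j), y) = ∑_{u ∈ V₃} [ SUMPIP(y, 0, u) + P(y, j, u) + P⁻¹(y + i₁, i₂, u) ]. If (i₁, i₂) = (k₂¹, k₂²) and j = k₁², then F^L((i, j), ·) has period k₁¹: F^L((i, j), y + k₁¹) = F^L((i, j), y) for every y ∈ V₁. -/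
/-- Truncated attack function for SUMPIP on `V = 𝔽₂^p × 𝔽₂^{n-t-p} × 𝔽₂^t`:
`F^L((i, j), y) = ∑_{u} [SUMPIP(y, 0, u) + P(y, j, u) + P⁻¹(y + i₁, i₂, u)]`
has period `k₁¹` (the high `p` bits of `k₁`) when `(i₁, i₂) = (k₂¹, k₂²)`
and `j = k₁²`. -/
theorem sumpip_truncated_period
    {n t p : ℕ}
    (P : Equiv.Perm
      ((Fin p → ZMod 2) × (Fin (n - t - p) → ZMod 2) × (Fin t → ZMod 2)))
    (k₁ k₂ : (Fin p → ZMod 2) × (Fin (n - t - p) → ZMod 2) × (Fin t → ZMod 2))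
    (k₁1 : Fin p → ZMod 2) (k₁2 : Fin (n - t - p) → ZMod 2) (k₁3 : Fin t → ZMod 2)
    (hk₁ : k₁ = (k₁1, k₁2, k₁3))
    (k₂1 : Fin p → ZMod 2) (k₂2 : Fin (n - t - p) → ZMod 2) (k₂3 : Fin t → ZMod 2)
    (hk₂ : k₂ = (k₂1, k₂2, k₂3))
    (SUMPIP : (Fin p → ZMod 2) × (Fin (n - t - p) → ZMod 2) × (Fin t → ZMod 2) →
      (Fin p → ZMod 2) × (Fin (n - t - p) → ZMod 2) × (Fin t → ZMod 2))
    (hS : ∀ x, SUMPIP x = P (x + k₁) + P.symm (x + k₂) + k₁ + k₂)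
    (FL : ((Fin p → ZMod 2) × (Fin (n - t - p) → ZMod 2)) × (Fin (n - t - p) → ZMod 2) →
      (Fin p → ZMod 2) →
      (Fin p → ZMod 2) × (Fin (n - t - p) → ZMod 2) × (Fin t → ZMod 2))
    (hFL : ∀ i₁ i₂ j y, FL ((i₁, i₂), j) y =
      ∑ u : Fin t → ZMod 2,
        (SUMPIP (y, (0 : Fin (n - t - p) → ZMod 2), u) + P (y, j, u)
          + P.symm (y + i₁, i₂, u)))
    (i₁ : Fin p → ZMod 2) (i₂ j : Fin (n - t - p) → ZMod 2)
    (hi : i₁ = k₂1 ∧ i₂ = k₂2) (hj : j = k₁2) :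
    ∀ y : Fin p → ZMod 2, FL ((i₁, i₂), j) (y + k₁1) = FL ((i₁, i₂), j) y := by

  obtain ⟨hi1, hi2⟩ := hi
  subst hi1; subst hi2; subst hj; subst hk₁; subst hk₂
  have hx : ∀ x : (Fin p → ZMod 2) × (Fin (n - t - p) → ZMod 2) × (Fin t → ZMod 2),
      x + x = 0 := by
    intro x
    refine Prod.ext (funext fun i => CharTwo.add_self_eq_zero _)
      (Prod.ext (funext fun i => CharTwo.add_self_eq_zero _)
        (funext fun i => CharTwo.add_self_eq_zero _))
  have hx1 : k₁1 + k₁1 = 0 := funext fun i => CharTwo.add_self_eq_zero _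
  have key : ∀ z, FL ((i₁, i₂), j) z =
      (∑ u : Fin t → ZMod 2, P (z + k₁1, j, u))
      + (∑ u : Fin t → ZMod 2, P (z, j, u))
      + (∑ _u : Fin t → ZMod 2, ((k₁1, j, k₁3) :
          (Fin p → ZMod 2) × (Fin (n - t - p) → ZMod 2) × (Fin t → ZMod 2)))
      + ∑ _u : Fin t → ZMod 2, ((i₁, i₂, k₂3) :
          (Fin p → ZMod 2) × (Fin (n - t - p) → ZMod 2) × (Fin t → ZMod 2)) := by
    intro z
    rw [hFL]
    have expand : ∀ u : Fin t → ZMod 2,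
        SUMPIP (z, (0 : Fin (n - t - p) → ZMod 2), u) + P (z, j, u)
          + P.symm (z + i₁, i₂, u)
        = (P (z + k₁1, j, u + k₁3) + P (z, j, u))
          + (P.symm (z + i₁, i₂, u + k₂3) + P.symm (z + i₁, i₂, u))
          + (k₁1, j, k₁3) + (i₁, i₂, k₂3) := by
      intro u
      rw [hS]
      simp only [Prod.mk_add_mk, zero_add]
      abel
    simp only [expand, Finset.sum_add_distrib]
    have r1 : ∑ u : Fin t → ZMod 2, P (z + k₁1, j, u + k₁3)
        = ∑ u : Fin t → ZMod 2, P (z + k₁1, j, u) :=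
      Fintype.sum_equiv (Equiv.addRight k₁3) _ _ (fun u => rfl)
    have r2 : ∑ u : Fin t → ZMod 2, P.symm (z + i₁, i₂, u + k₂3)
        = ∑ u : Fin t → ZMod 2, P.symm (z + i₁, i₂, u) :=
      Fintype.sum_equiv (Equiv.addRight k₂3) _ _ (fun u => rfl)
    rw [r1, r2, hx (∑ u : Fin t → ZMod 2, P.symm (z + i₁, i₂, u)), add_zero]
  intro y
  rw [key, key, add_assoc y k₁1 k₁1, hx1, add_zero]
  abel
end

section
/- Fix n > d ≥ 1 and identify 𝔽₂^{n−d} with V₁ × V₂ × V₃ where V₁ = 𝔽₂^p, V₂ = 𝔽₂^{n−d−t−p}, V₃ = 𝔽₂^{t}. Let P be a permutation of 𝔽₂^{n−d} × 𝔽₂^{d}, let k₁, k₂ ∈ 𝔽₂^n have most-significant parts a = msb_{n−d}(k₁) = (a¹, a², a³) and b = msb_{n−d}(k₂) = (b¹, b², b³) in 𝔽₂^{n−d}, and define DS-SoEM(x) = P(x + a, 0) + P(x + b, 1) + k₁ + k₂ for x ∈ 𝔽₂^{n−d}, where 0 and 1 denote the all-zeros and all-ones vectors of 𝔽₂^{d}.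 For i = (i₁, i₂) ∈ V₁ × V₂, j ∈ V₂, y ∈ V₁ define F^L((i, j), y) = ∑_{u ∈ V₃} [ DS-SoEM(y, 0, u) + P((y, j, u), 0) + P((y + i₁, i₂, u), 1) ]. If (i₁, i₂) = (b¹, b²) and j = a², then F^L((i, j), ·) has period a¹: F^L((i, j), y + a¹) = F^L((i, j), y) for every y ∈ V₁. -/
/-- Truncated attack function for DS-SoEM, with
`𝔽₂^{n-d} = 𝔽₂^p × 𝔽₂^{n-d-t-p} × 𝔽₂^t`:
`F^L((i, j), y) = ∑_{u} [DS-SoEM(y, 0, u) + P((y, j, u), 0) + P((y + i₁, i₂, u), 1)]`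
has period `a¹` (the high `p` bits of `a = msb_{n-d}(k₁)`) when
`(i₁, i₂) = (b¹, b²)` and `j = a²`, where `b = msb_{n-d}(k₂)`. -/
theorem ds_soEM_truncated_period
    {n d t p : ℕ} (hd : 1 ≤ d) (hdn : d < n)
    (P : Equiv.Perm
      (((Fin p → ZMod 2) × (Fin (n - d - t - p) → ZMod 2) × (Fin t → ZMod 2))
        × (Fin d → ZMod 2)))
    (k₁ k₂ : ((Fin p → ZMod 2) × (Fin (n - d - t - p) → ZMod 2) × (Fin t → ZMod 2))
        × (Fin d → ZMod 2))
    (a b : (Fin p → ZMod 2) × (Fin (n - d - t - p) → ZMod 2) × (Fin t → ZMod 2))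
    (ha : a = k₁.1) (hb : b = k₂.1)
    (a₁ : Fin p → ZMod 2) (a₂ : Fin (n - d - t - p) → ZMod 2) (a₃ : Fin t → ZMod 2)
    (hacomp : a = (a₁, a₂, a₃))
    (b₁ : Fin p → ZMod 2) (b₂ : Fin (n - d - t - p) → ZMod 2) (b₃ : Fin t → ZMod 2)
    (hbcomp : b = (b₁, b₂, b₃))
    (DSSoEM : ((Fin p → ZMod 2) × (Fin (n - d - t - p) → ZMod 2) × (Fin t → ZMod 2)) →
      ((Fin p → ZMod 2) × (Fin (n - d - t - p) → ZMod 2) × (Fin t → ZMod 2))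
        × (Fin d → ZMod 2))
    (hDS : ∀ x, DSSoEM x =
      P (x + a, (0 : Fin d → ZMod 2)) + P (x + b, fun _ => 1) + k₁ + k₂)
    (FL : ((Fin p → ZMod 2) × (Fin (n - d - t - p) → ZMod 2))
        × (Fin (n - d - t - p) → ZMod 2) →
      (Fin p → ZMod 2) →
      ((Fin p → ZMod 2) × (Fin (n - d - t - p) → ZMod 2) × (Fin t → ZMod 2))
        × (Fin d → ZMod 2))
    (hFL : ∀ i₁ i₂ j y, FL ((i₁, i₂), j) y =
      ∑ u : Fin t → ZMod 2,
        (DSSoEM (y, (0 : Fin (n - d - t - p) → ZMod 2), u)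
          + P ((y, j, u), (0 : Fin d → ZMod 2))
          + P ((y + i₁, i₂, u), fun _ => 1)))
    (i₁ : Fin p → ZMod 2) (i₂ j : Fin (n - d - t - p) → ZMod 2)
    (hi : i₁ = b₁ ∧ i₂ = b₂) (hj : j = a₂) :
    ∀ y : Fin p → ZMod 2, FL ((i₁, i₂), j) (y + a₁) = FL ((i₁, i₂), j) y := by

  obtain ⟨hi1, hi2⟩ := hi
  rw [hi1, hi2, hj]
  intro y
  have h2 : ∀ x : ((Fin p → ZMod 2) × (Fin (n - d - t - p) → ZMod 2) × (Fin t → ZMod 2))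
      × (Fin d → ZMod 2), x + x = 0 := by
    intro x
    have hz : ∀ c : ZMod 2, c + c = 0 := by decide
    ext i <;> simp [hz]
  have haa : y + a₁ + a₁ = y := by
    have : a₁ + a₁ = 0 := by
      funext i
      have hz : ∀ c : ZMod 2, c + c = 0 := by decide
      exact hz _
    rw [add_assoc, this, add_zero]
  have r1 : ∀ c₁ : Fin p → ZMod 2,
      (∑ u : Fin t → ZMod 2, P ((c₁, a₂, u + a₃), (0 : Fin d → ZMod 2)))
        = ∑ u : Fin t → ZMod 2, P ((c₁, a₂, u), (0 : Fin d → ZMod 2)) := fun c₁ =>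
    Equiv.sum_comp (Equiv.addRight a₃) (fun u => P ((c₁, a₂, u), (0 : Fin d → ZMod 2)))
  have r2 : ∀ c₁ : Fin p → ZMod 2,
      (∑ u : Fin t → ZMod 2, P ((c₁, b₂, u + b₃), fun _ => (1 : ZMod 2)))
        = ∑ u : Fin t → ZMod 2, P ((c₁, b₂, u), fun _ => (1 : ZMod 2)) := fun c₁ =>
    Equiv.sum_comp (Equiv.addRight b₃) (fun u => P ((c₁, b₂, u), fun _ => (1 : ZMod 2)))
  rw [hFL, hFL]
  simp only [hDS, hacomp, hbcomp, Prod.mk_add_mk, zero_add, Finset.sum_add_distrib]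
  rw [r1, r1, r2, r2, haa]
  have hBL := h2 (∑ u : Fin t → ZMod 2, P ((y + a₁ + b₁, b₂, u), fun _ => (1 : ZMod 2)))
  have hBR := h2 (∑ u : Fin t → ZMod 2, P ((y + b₁, b₂, u), fun _ => (1 : ZMod 2)))
  linear_combination hBL - hBR
end

section
/- Let V = 𝔽₂^{n−t} × 𝔽₂^{t}, let P₁, P₂ be permutations of V, and let k₁ = (k₁^l, k₁^r), k₂ = (k₂^l, k₂^r) ∈ V. Define SoEM22(x) = P₁(x + k₁) + P₂(x + k₂) + k₁ + k₂, and for i, y ∈ 𝔽₂^{n−t} define F^L(i, y) = ∑_{u ∈ 𝔽₂^{t}} [ SoEM22(y, u) + P₁(y, u) + P₂(y + i, u) ]. If i = k₂^l, then F^L(i, ·) has the (n−t)-bit period k₁^l: F^L(i, y + k₁^l) = F^L(i, y) for every y ∈ 𝔽₂^{n−t}. -/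
section aux

variable {n t : ℕ}

private abbrev V (n t : ℕ) := (Fin (n - t) → ZMod 2) × (Fin t → ZMod 2)

private lemma add_self_V (x : V n t) : x + x = 0 := by
  ext j <;> simp [CharTwo.add_self_eq_zero]

end aux

/-- Q2-model truncated attack function for SoEM22 on `V = 𝔽₂^{n-t} × 𝔽₂^t`:
`F^L(i, y) = ∑_{u ∈ 𝔽₂^t} [SoEM22(y, u) + P₁(y, u) + P₂(y + i, u)]` has the
`(n-t)`-bit period `k₁^l` (the high bits of `k₁`) when `i = k₂^l`. -/
theorem soEM22_q2_truncated_period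
    {n t : ℕ}
    (P₁ P₂ : Equiv.Perm ((Fin (n - t) → ZMod 2) × (Fin t → ZMod 2)))
    (k₁ k₂ : (Fin (n - t) → ZMod 2) × (Fin t → ZMod 2))
    (SoEM22 : (Fin (n - t) → ZMod 2) × (Fin t → ZMod 2) →
      (Fin (n - t) → ZMod 2) × (Fin t → ZMod 2))
    (hS : ∀ x, SoEM22 x = P₁ (x + k₁) + P₂ (x + k₂) + k₁ + k₂)
    (FL : (Fin (n - t) → ZMod 2) → (Fin (n - t) → ZMod 2) →
      (Fin (n - t) → ZMod 2) × (Fin t → ZMod 2))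
    (hFL : ∀ i y, FL i y =
      ∑ u : Fin t → ZMod 2, (SoEM22 (y, u) + P₁ (y, u) + P₂ (y + i, u)))
    (i : Fin (n - t) → ZMod 2) (hi : i = k₂.1) :
    ∀ y : Fin (n - t) → ZMod 2, FL i (y + k₁.1) = FL i y := by
  subst hi
  -- key closed form: FL k₂.1 z = (∑ u, P₁ (z + k₁.1, u)) + (∑ u, P₁ (z, u)) + c
  have key : ∀ z : Fin (n - t) → ZMod 2,
      FL k₂.1 z = (∑ u : Fin t → ZMod 2, P₁ (z + k₁.1, u))
        + (∑ u : Fin t → ZMod 2, P₁ (z, u))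
        + (Fintype.card (Fin t → ZMod 2)) • (k₁ + k₂) := by
    intro z
    rw [hFL]
    have e1 : ∀ u : Fin t → ZMod 2,
        SoEM22 (z, u) + P₁ (z, u) + P₂ (z + k₂.1, u)
          = (P₁ (z + k₁.1, u + k₁.2) + P₁ (z, u))
            + (P₂ (z + k₂.1, u + k₂.2) + P₂ (z + k₂.1, u))
            + (k₁ + k₂) := by
      intro u
      rw [hS]
      have h1 : (z, u) + k₁ = (z + k₁.1, u + k₁.2) := rfl
      have h2 : (z, u) + k₂ = (z + k₂.1, u + k₂.2) := rfl
      rw [h1, h2]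
      abel
    simp only [e1]
    rw [Finset.sum_add_distrib, Finset.sum_add_distrib, Finset.sum_add_distrib,
      Finset.sum_add_distrib, Finset.sum_const, Finset.card_univ]
    have r1 : (∑ u : Fin t → ZMod 2, P₁ (z + k₁.1, u + k₁.2))
        = ∑ u : Fin t → ZMod 2, P₁ (z + k₁.1, u) :=
      Fintype.sum_equiv (Equiv.addRight k₁.2) _ _ (fun u => rfl)
    have r2 : (∑ u : Fin t → ZMod 2, P₂ (z + k₂.1, u + k₂.2))
        = ∑ u : Fin t → ZMod 2, P₂ (z + k₂.1, u) :=
      Fintype.sum_equiv (Equiv.addRight k₂.2) _ _ (fun u => rfl)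
    rw [r1, r2, add_self_V]
    abel
  intro y
  rw [key, key]
  have hy : y + k₁.1 + k₁.1 = y := by
    ext j
    simp [add_assoc, CharTwo.add_self_eq_zero]
  rw [hy]
  abel
end
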